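/- For every m ∈ M and every ε ∈ ℤ/2ℤ, the set of 'undetected' vertices N_ε = {v ∈ V : for every w with (v,w) ∈ P, (m + 𝒮)(v,w) ≠ ε} is a clique of H; that is, any two distinct vertices v, v' ∈ N_ε are adjacent in H (equivalently, (v,v') ∉ P). -/

import Mathlib

/-- The vertex set of the thickened graph `𝕋(H)`: ordered pairs of distinct, non-adjacent
vertices of `H` (pairs at "cubical distance ≥ 2", where cubes are modeled by cliques of
`H`). -/
def statePairs {V : Type*} (H : SimpleGraph V) : Set (V × V) :=
  {p | p.1 ≠ p.2 ∧ ¬ H.Adj p.1 p.2}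

/-- The initial state `𝒮`: with respect to a fixed linear order on `V`, the pair `(v, w)`
is assigned `1` iff `v < w`. -/
def initialState {V : Type*} [LinearOrder V] (H : SimpleGraph V) :
    statePairs H → ZMod 2 :=
  fun p => if p.1.1 < p.1.2 then 1 else 0

open Classical in
/-- The move `m_{vw}`: the state taking the value `1` exactly at the vertices `(v, w)` and
`(w, v)` and `0` elsewhere. -/
noncomputable def move {V : Type*} (H : SimpleGraph V) (v w : V) :
    statePairs H → ZMod 2 :=
  fun p => if p.1 = (v, w) ∨ p.1 = (w, v) then 1 else 0

/-- The subgroup `M` of the group of states (under pointwise addition) generated by all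
the moves `m_{vw}` for `(v, w) ∈ P`. -/
noncomputable def moveGroup {V : Type*} (H : SimpleGraph V) :
    AddSubgroup (statePairs H → ZMod 2) :=
  AddSubgroup.closure {f | ∃ v w : V, (v, w) ∈ statePairs H ∧ f = move H v w}



lemma moveGroup_symm {V : Type*} (H : SimpleGraph V)
    (m : statePairs H → ZMod 2) (hm : m ∈ moveGroup H) :
    ∀ a b : V, ∀ h1 : (a, b) ∈ statePairs H, ∀ h2 : (b, a) ∈ statePairs H,
      m ⟨(a, b), h1⟩ = m ⟨(b, a), h2⟩ := by
  induction hm using AddSubgroup.closure_induction with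
  | mem f hf =>
    obtain ⟨x, y, _, rfl⟩ := hf
    intro a b h1 h2
    simp only [move]
    congr 1
    simp [Prod.ext_iff]
    tauto
  | zero => intro a b h1 h2; rfl
  | add f g hf hg ihf ihg =>
    intro a b h1 h2
    simp only [Pi.add_apply, ihf a b h1 h2, ihg a b h1 h2]
  | neg f hf ihf =>
    intro a b h1 h2
    simp only [Pi.neg_apply, ihf a b h1 h2]

/-- For every `m ∈ M` and every `ε ∈ ℤ/2ℤ`, the set of "undetected"
vertices `N_ε = {v : ∀ w with (v,w) ∈ P, (m + 𝒮)(v,w) ≠ ε}` is a clique of `H`: any two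
distinct vertices of `N_ε` are adjacent in `H`. -/
theorem undetected_is_clique {V : Type*} [Fintype V] [LinearOrder V] (H : SimpleGraph V)
    (m : statePairs H → ZMod 2) (hm : m ∈ moveGroup H) (ε : ZMod 2)
    (v v' : V) (hne : v ≠ v')
    (hv : ∀ w : V, ∀ h : (v, w) ∈ statePairs H,
      (m + initialState H) ⟨(v, w), h⟩ ≠ ε)
    (hv' : ∀ w : V, ∀ h : (v', w) ∈ statePairs H,
      (m + initialState H) ⟨(v', w), h⟩ ≠ ε) :
    H.Adj v v' := by
  by_contra hadj
  have h1 : (v, v') ∈ statePairs H := ⟨hne, hadj⟩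
  have h2 : (v', v) ∈ statePairs H := ⟨hne.symm, fun a => hadj a.symm⟩
  have hsym := moveGroup_symm H m hm v v' h1 h2
  have e1 := hv v' h1
  have e2 := hv' v h2
  simp only [Pi.add_apply, initialState] at e1 e2
  rw [← hsym] at e2
  have key : ∀ a ε : ZMod 2, ¬ (a + 1 ≠ ε ∧ a + 0 ≠ ε) := by decide
  rcases hne.lt_or_gt with h | h
  · rw [if_pos h] at e1
    rw [if_neg (not_lt.2 h.le)] at e2
    exact key _ ε ⟨e1, e2⟩
  · rw [if_neg (not_lt.2 h.le)] at e1
    rw [if_pos h] at e2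
    exact key _ ε ⟨e2, e1⟩
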